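/- Two finite signed measures μ, ν on [0,∞) are equal if and only if their Laplace transforms agree: ∫ e^{−λx} μ(dx) = ∫ e^{−λx} ν(dx) for all λ > 0. -/

import Mathlib

open MeasureTheory Filter Topology Set
open scoped NNReal ENNReal


namespace LaplaceAux

noncomputable def e (x : ℝ≥0) : (Set.Icc (0:ℝ) 1) :=
  ⟨Real.exp (-(x:ℝ)), ⟨(Real.exp_pos _).le, Real.exp_le_one_iff.mpr (by simp)⟩⟩

lemma e_cont : Continuous e := by
  apply Continuous.subtype_mk
  exact Real.continuous_exp.comp (continuous_neg.comp NNReal.continuous_coe)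

lemma e_inj : Function.Injective e := by
  intro x y h
  have : Real.exp (-(x:ℝ)) = Real.exp (-(y:ℝ)) := congrArg Subtype.val h
  have := Real.exp_injective this
  exact NNReal.coe_injective (by linarith)

lemma integrable_exp (P : Measure ℝ≥0) [IsFiniteMeasure P] (l : ℝ) (hl : 0 ≤ l) :
    Integrable (fun x : ℝ≥0 => Real.exp (-(l * (x:ℝ)))) P := by
  have hc : Continuous fun x : ℝ≥0 => Real.exp (-(l * (x:ℝ))) :=
    Real.continuous_exp.comp (continuous_neg.comp (continuous_const.mul NNReal.continuous_coe))
  refine (integrable_const (1:ℝ)).mono' hc.aestronglyMeasurable ?_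
  filter_upwards with x
  rw [Real.norm_eq_abs, abs_of_pos (Real.exp_pos _)]
  { rw [Real.exp_le_one_iff]; simp; positivity }

lemma cont_int (μ : Measure (Set.Icc (0:ℝ) 1)) [IsFiniteMeasure μ] :
    Continuous fun f : C(Set.Icc (0:ℝ) 1, ℝ) => ∫ x, f x ∂μ := by
  have key : ∀ f g : C(Set.Icc (0:ℝ) 1, ℝ),
      dist (∫ x, f x ∂μ) (∫ x, g x ∂μ) ≤ (μ Set.univ).toNNReal * dist f g := by
    intro f g
    have hif : Integrable f μ := (BoundedContinuousFunction.mkOfCompact f).integrable μ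
    have hig : Integrable g μ := (BoundedContinuousFunction.mkOfCompact g).integrable μ
    rw [Real.dist_eq, ← integral_sub hif hig]
    calc |∫ x, (f x - g x) ∂μ| ≤ ∫ x, ‖f x - g x‖ ∂μ := by
          simpa [Real.norm_eq_abs] using norm_integral_le_integral_norm (μ := μ) (fun x => f x - g x)
      _ ≤ ∫ _x, dist f g ∂μ := by
          refine integral_mono (hif.sub hig).norm (integrable_const _) fun x => ?_
          rw [show ‖f x - g x‖ = dist (f x) (g x) from (dist_eq_norm _ _).symm]
          exact ContinuousMap.dist_apply_le_dist x
      _ = (μ Set.univ).toReal * dist f g := by rw [integral_const]; simp [mul_comm, measureReal_def]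
      _ = (μ Set.univ).toNNReal * dist f g := rfl
  exact (LipschitzWith.of_dist_le_mul key).continuous

end LaplaceAux

namespace LaplaceAux

lemma integrable_cm (μ : Measure (Set.Icc (0:ℝ) 1)) [IsFiniteMeasure μ]
    (f : C(Set.Icc (0:ℝ) 1, ℝ)) : Integrable f μ :=
  (BoundedContinuousFunction.mkOfCompact f).integrable μ

lemma ext_of_moments (μ ν : Measure (Set.Icc (0:ℝ) 1)) [IsFiniteMeasure μ] [IsFiniteMeasure ν]
    (hmom : ∀ n : ℕ, ∫ x : Set.Icc (0:ℝ) 1, (x:ℝ)^n ∂μ = ∫ x : Set.Icc (0:ℝ) 1, (x:ℝ)^n ∂ν) :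
    μ = ν := by
  have hcont : ∀ f : C(Set.Icc (0:ℝ) 1, ℝ), ∫ x, f x ∂μ = ∫ x, f x ∂ν := by
    have hE : IsClosed {f : C(Set.Icc (0:ℝ) 1, ℝ) | ∫ x, f x ∂μ = ∫ x, f x ∂ν} :=
      isClosed_eq (cont_int μ) (cont_int ν)
    have hpoly : ∀ (κ : Measure (Set.Icc (0:ℝ) 1)) [IsFiniteMeasure κ] (p : Polynomial ℝ),
        ∫ x : Set.Icc (0:ℝ) 1, Polynomial.eval (x:ℝ) p ∂κ
          = ∑ i ∈ Finset.range (p.natDegree + 1), p.coeff i * ∫ x : Set.Icc (0:ℝ) 1, (x:ℝ)^i ∂κ := by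
      intro κ _ p
      have hint : ∀ i : ℕ, Integrable (fun x : Set.Icc (0:ℝ) 1 => p.coeff i * (x:ℝ)^i) κ := by
        intro i
        exact integrable_cm κ ⟨fun x => p.coeff i * (x:ℝ)^i, by fun_prop⟩
      calc ∫ x : Set.Icc (0:ℝ) 1, Polynomial.eval (x:ℝ) p ∂κ
          = ∫ x : Set.Icc (0:ℝ) 1, ∑ i ∈ Finset.range (p.natDegree + 1), p.coeff i * (x:ℝ)^i ∂κ := by
            congr 1; funext x; exact Polynomial.eval_eq_sum_range (p := p) (x:ℝ)
        _ = ∑ i ∈ Finset.range (p.natDegree + 1), ∫ x : Set.Icc (0:ℝ) 1, p.coeff i * (x:ℝ)^i ∂κ :=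
            integral_finset_sum _ (fun i _ => hint i)
        _ = ∑ i ∈ Finset.range (p.natDegree + 1), p.coeff i * ∫ x : Set.Icc (0:ℝ) 1, (x:ℝ)^i ∂κ := by
            simp_rw [integral_const_mul]
    intro f
    have hf : f ∈ closure ((polynomialFunctions (Set.Icc (0:ℝ) 1) : Subalgebra ℝ _) : Set _) := by
      have h := polynomialFunctions.topologicalClosure (Set.Icc (0:ℝ) 1)
      have : f ∈ (polynomialFunctions (Set.Icc (0:ℝ) 1)).topologicalClosure := by
        rw [h]; trivial
      exact this
    refine closure_minimal ?_ hE hf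
    intro g hg
    rw [polynomialFunctions_coe] at hg
    obtain ⟨p, rfl⟩ := hg
    show (∫ x, (Polynomial.toContinuousMapOnAlgHom _ p) x ∂μ) = _
    simp only [Polynomial.toContinuousMapOnAlgHom_apply, Polynomial.toContinuousMapOn_apply,
      Polynomial.toContinuousMap_apply]
    rw [hpoly μ p, hpoly ν p]
    exact Finset.sum_congr rfl fun i _ => by rw [hmom i]
  refine ext_of_forall_lintegral_eq_of_IsFiniteMeasure ?_
  intro f
  have hint : Integrable (fun x => (f x : ℝ)) μ :=
    integrable_cm μ ⟨fun x => (f x : ℝ), NNReal.continuous_coe.comp f.continuous⟩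
  have hint' : Integrable (fun x => (f x : ℝ)) ν :=
    integrable_cm ν ⟨fun x => (f x : ℝ), NNReal.continuous_coe.comp f.continuous⟩
  rw [lintegral_coe_eq_integral _ hint, lintegral_coe_eq_integral _ hint']
  exact congrArg ENNReal.ofReal
    (hcont ⟨fun x => (f x : ℝ), NNReal.continuous_coe.comp f.continuous⟩)

end LaplaceAux

namespace LaplaceAux

lemma key (P Q : Measure ℝ≥0) [IsFiniteMeasure P] [IsFiniteMeasure Q]
    (h : ∀ l : ℝ, 0 < l →
      ∫ x, Real.exp (-(l * (x:ℝ))) ∂P = ∫ x, Real.exp (-(l * (x:ℝ))) ∂Q) : P = Q := by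
  -- total masses agree
  have hmass : P Set.univ = Q Set.univ := by
    have tend : ∀ (R : Measure ℝ≥0) [IsFiniteMeasure R],
        Tendsto (fun n : ℕ => ∫ x, Real.exp (-((1/(n+1) : ℝ) * (x:ℝ))) ∂ R) atTop
          (𝓝 ((R Set.univ).toReal)) := by
      intro R _
      have := MeasureTheory.tendsto_integral_of_dominated_convergence (μ := R)
        (F := fun n : ℕ => fun x : ℝ≥0 => Real.exp (-((1/(n+1) : ℝ) * (x:ℝ))))
        (f := fun _ => (1:ℝ)) (bound := fun _ => (1:ℝ))
        (fun n => ((integrable_exp R (1/(n+1)) (by positivity)).1))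
        (integrable_const 1)
        (fun n => Eventually.of_forall fun x => by
          rw [Real.norm_eq_abs, abs_of_pos (Real.exp_pos _), Real.exp_le_one_iff]
          simp only [neg_nonpos]
          positivity)
        (Eventually.of_forall fun x => by
          have h1 : Tendsto (fun n : ℕ => -((1/(n+1) : ℝ) * (x:ℝ))) atTop (𝓝 (-(0 * (x:ℝ)))) := by
            exact (Tendsto.mul tendsto_one_div_add_atTop_nhds_zero_nat tendsto_const_nhds).neg
          have := (Real.continuous_exp.tendsto _).comp h1
          simpa [Function.comp_def] using this)
      simpa [measureReal_def] using this
    have h1 := tend P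
    have h2 := tend Q
    have heq : (fun n : ℕ => ∫ x, Real.exp (-((1/(n+1) : ℝ) * (x:ℝ))) ∂P)
        = fun n : ℕ => ∫ x, Real.exp (-((1/(n+1) : ℝ) * (x:ℝ))) ∂Q := by
      funext n; exact h _ (by positivity)
    rw [heq] at h1
    have := tendsto_nhds_unique h1 h2
    exact (ENNReal.toReal_eq_toReal_iff' (measure_ne_top _ _) (measure_ne_top _ _)).mp this
  -- pushforwards have equal moments
  have hmapint : ∀ (R : Measure ℝ≥0) (n : ℕ),
      ∫ x : Set.Icc (0:ℝ) 1, (x:ℝ)^n ∂(P.map e) = ∫ x : Set.Icc (0:ℝ) 1, (x:ℝ)^n ∂(P.map e) :=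
    fun _ _ => rfl
  have hmom : ∀ n : ℕ,
      ∫ x : Set.Icc (0:ℝ) 1, (x:ℝ)^n ∂(P.map e) = ∫ x : Set.Icc (0:ℝ) 1, (x:ℝ)^n ∂(Q.map e) := by
    intro n
    have hrw : ∀ (R : Measure ℝ≥0),
        ∫ x : Set.Icc (0:ℝ) 1, (x:ℝ)^n ∂(R.map e)
          = ∫ y : ℝ≥0, Real.exp (-((n:ℝ) * (y:ℝ))) ∂ R := by
      intro R
      rw [integral_map e_cont.measurable.aemeasurable
        (Continuous.aestronglyMeasurable (by fun_prop))]
      congr 1; funext y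
      show (Real.exp (-(y:ℝ)))^n = _
      rw [← Real.exp_nat_mul]
      ring_nf
    rw [hrw P, hrw Q]
    rcases Nat.eq_zero_or_pos n with hn | hn
    · subst hn
      simp only [Nat.cast_zero, zero_mul, neg_zero, Real.exp_zero, integral_const, smul_eq_mul,
        mul_one, measureReal_def, hmass]
    · exact h _ (by exact_mod_cast hn)
  have hmapeq : P.map e = Q.map e := ext_of_moments _ _ hmom
  -- pull back along the measurable embedding
  have me : MeasurableEmbedding e := e_cont.measurableEmbedding e_inj
  ext A hA
  have : P.map e (e '' A) = Q.map e (e '' A) := by rw [hmapeq]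
  rwa [me.map_apply, me.map_apply, e_inj.preimage_image] at this

end LaplaceAux

/-- The Laplace transform of a finite signed measure on `[0,∞)`, via its Jordan
decomposition. -/
noncomputable def laplaceTransform (μ : MeasureTheory.SignedMeasure ℝ≥0) (l : ℝ) : ℝ :=
  (∫ x, Real.exp (-(l * (x : ℝ))) ∂μ.toJordanDecomposition.posPart) -
    ∫ x, Real.exp (-(l * (x : ℝ))) ∂μ.toJordanDecomposition.negPart

/-- two finite signed measures on `[0,∞)` are equal if and only if their
Laplace transforms agree for all `λ > 0`. -/
theorem signed_measure_eq_iff_laplace_eq (μ ν : MeasureTheory.SignedMeasure ℝ≥0) :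
    μ = ν ↔ ∀ l : ℝ, 0 < l → laplaceTransform μ l = laplaceTransform ν l := by
  constructor
  · rintro rfl l _; rfl
  · intro h
    set P := μ.toJordanDecomposition.posPart + ν.toJordanDecomposition.negPart with hP
    set Q := ν.toJordanDecomposition.posPart + μ.toJordanDecomposition.negPart with hQ
    have hPQ : P = Q := by
      refine LaplaceAux.key P Q ?_
      intro l hl
      rw [hP, hQ, integral_add_measure (LaplaceAux.integrable_exp _ l hl.le)
        (LaplaceAux.integrable_exp _ l hl.le), integral_add_measure
        (LaplaceAux.integrable_exp _ l hl.le) (LaplaceAux.integrable_exp _ l hl.le)]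
      have := h l hl
      unfold laplaceTransform at this
      linarith
    ext i hi
    have hset : P i = Q i := by rw [hPQ]
    rw [hP, hQ, Measure.coe_add, Measure.coe_add, Pi.add_apply, Pi.add_apply] at hset
    have h1 : μ i = (μ.toJordanDecomposition.posPart i).toReal
        - (μ.toJordanDecomposition.negPart i).toReal := by
      conv_lhs => rw [← SignedMeasure.toSignedMeasure_toJordanDecomposition μ]
      rw [JordanDecomposition.toSignedMeasure, VectorMeasure.sub_apply,
        Measure.toSignedMeasure_apply, Measure.toSignedMeasure_apply, if_pos hi, if_pos hi]
      rfl
    have h2 : ν i = (ν.toJordanDecomposition.posPart i).toReal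
        - (ν.toJordanDecomposition.negPart i).toReal := by
      conv_lhs => rw [← SignedMeasure.toSignedMeasure_toJordanDecomposition ν]
      rw [JordanDecomposition.toSignedMeasure, VectorMeasure.sub_apply,
        Measure.toSignedMeasure_apply, Measure.toSignedMeasure_apply, if_pos hi, if_pos hi]
      rfl
    rw [h1, h2]
    have e1 := congrArg ENNReal.toReal hset
    rw [ENNReal.toReal_add (measure_ne_top _ i) (measure_ne_top _ i),
      ENNReal.toReal_add (measure_ne_top _ i) (measure_ne_top _ i)] at e1
    linarith
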